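/- arXiv:2106.06126 — 3 statements merged into one kernel-verified Lean document; each statement's English description precedes it below -/
import Mathlib

section
/- With the same setup (Z finite labeled dataset, teacher h^t, student h^s, risks as 0/1 averages, acc(h^t) and err(h^t) both nonempty), suppose R^{h^t}_{acc(h^t)}(h^s) > 0 and R_Z(h^t) > 0. Then R_Z(h^s) ≤ R_Z(h^t) if and only if R^{h^t}_{err(h^t)}(h^s) / R^{h^t}_{acc(h^t)}(h^s) ≥ 1/R_Z(h^t) − 1. -/
open Finset

variable {ι X : Type*}

/-- Empirical 0/1 risk of classifier `h` on labeled set `S`. -/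
noncomputable def risk (S : Finset ι) (x : ι → X) (y : ι → Bool) (h : X → Bool) : ℝ :=
  (S.filter (fun i => h (x i) ≠ y i)).card / S.card

/-- Disagreement rate of student `hs` with teacher `ht` on set `S`. -/
noncomputable def tsRisk (S : Finset ι) (x : ι → X) (ht hs : X → Bool) : ℝ :=
  (S.filter (fun i => ht (x i) ≠ hs (x i))).card / S.card

/-- Points of `Z` where the teacher is correct. -/
def accSet (Z : Finset ι) (x : ι → X) (y : ι → Bool) (ht : X → Bool) : Finset ι :=
  Z.filter (fun i => ht (x i) = y i)

/-- Points of `Z` where the teacher is wrong. -/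
def errSet (Z : Finset ι) (x : ι → X) (y : ι → Bool) (ht : X → Bool) : Finset ι :=
  Z.filter (fun i => ht (x i) ≠ y i)

theorem truth_over_teacher (Z : Finset ι) (x : ι → X) (y : ι → Bool) (ht hs : X → Bool)
    (hacc : (accSet Z x y ht).Nonempty) (herr : (errSet Z x y ht).Nonempty)
    (haccpos : 0 < tsRisk (accSet Z x y ht) x ht hs)
    (htpos : 0 < risk Z x y ht) :
    risk Z x y hs ≤ risk Z x y ht ↔
      tsRisk (errSet Z x y ht) x ht hs / tsRisk (accSet Z x y ht) x ht hs ≥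
        1 / risk Z x y ht - 1 := by
  classical
  set A := accSet Z x y ht with hAdef
  set E := errSet Z x y ht with hEdef
  set a := (A.filter (fun i => ht (x i) ≠ hs (x i))).card with hadef
  set e := (E.filter (fun i => ht (x i) ≠ hs (x i))).card with hedef
  have hAE : A.card + E.card = Z.card := by
    simpa [hAdef, hEdef, accSet, errSet] using
      Finset.card_filter_add_card_filter_not (s := Z)
        (p := fun i => ht (x i) = y i)
  have hApos : 0 < A.card := hacc.card_pos
  have hEpos : 0 < E.card := herr.card_pos
  have hZpos : 0 < Z.card := by omega
  -- a > 0
  have hapos : 0 < a := by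
    by_contra h
    have : a = 0 := by omega
    rw [tsRisk, ← hadef, this] at haccpos
    simp at haccpos
  have heE : e ≤ E.card := Finset.card_filter_le _ _
  -- student's error count
  have hsplit : (Z.filter (fun i => hs (x i) ≠ y i)).card = a + (E.card - e) := by
    have h1 : Z.filter (fun i => hs (x i) ≠ y i)
        = A.filter (fun i => hs (x i) ≠ y i) ∪ E.filter (fun i => hs (x i) ≠ y i) := by
      rw [hAdef, hEdef, accSet, errSet, Finset.filter_filter, Finset.filter_filter,
        ← Finset.filter_or]
      exact (Finset.filter_congr (fun i _ => by tauto)).symm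
    have hdisj : Disjoint (A.filter (fun i => hs (x i) ≠ y i))
        (E.filter (fun i => hs (x i) ≠ y i)) := by
      apply Finset.disjoint_filter_filter
      rw [hAdef, hEdef, accSet, errSet]
      exact Finset.disjoint_filter_filter' _ _ (by simp [Pi.le_def]; tauto)
    have hA1 : A.filter (fun i => hs (x i) ≠ y i) = A.filter (fun i => ht (x i) ≠ hs (x i)) := by
      apply Finset.filter_congr
      intro i hi
      rw [hAdef, accSet, Finset.mem_filter] at hi
      simp only [hi.2]
      tauto
    have hE1 : (E.filter (fun i => hs (x i) ≠ y i)).card = E.card - e := by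
      have : E.filter (fun i => hs (x i) ≠ y i) = E.filter (fun i => ¬ (ht (x i) ≠ hs (x i))) := by
        apply Finset.filter_congr
        intro i hi
        rw [hEdef, errSet, Finset.mem_filter] at hi
        have := hi.2
        simp only [ne_eq] at *
        cases Bool.eq_false_or_eq_true (ht (x i)) <;>
          cases Bool.eq_false_or_eq_true (hs (x i)) <;>
          cases Bool.eq_false_or_eq_true (y i) <;> simp_all
      rw [this, Finset.filter_not, Finset.card_sdiff_of_subset (Finset.filter_subset _ _), hedef]
    rw [h1, Finset.card_union_of_disjoint hdisj, hA1, hE1, hadef]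
  -- now pure real arithmetic
  have hEc : Z.filter (fun i => ht (x i) ≠ y i) = E := rfl
  rw [risk, risk, tsRisk, tsRisk, hEc, ← hadef, ← hedef, hsplit]
  have hAr : (0:ℝ) < A.card := by exact_mod_cast hApos
  have hEr : (0:ℝ) < E.card := by exact_mod_cast hEpos
  have hZr : (0:ℝ) < Z.card := by exact_mod_cast hZpos
  have har : (0:ℝ) < a := by exact_mod_cast hapos
  have hN : (Z.card : ℝ) = A.card + E.card := by exact_mod_cast hAE.symm
  have hcast : ((a + (E.card - e) : ℕ) : ℝ) = a + (E.card - e : ℝ) := by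
    push_cast [heE]; ring
  rw [hcast, div_le_div_iff_of_pos_right hZr, ge_iff_le]
  have key : (1:ℝ) / ((E.card:ℝ) / (Z.card:ℝ)) - 1 = (A.card:ℝ) / E.card := by
    rw [hN]; field_simp; ring
  have hre : ((e:ℝ)/E.card) / ((a:ℝ)/A.card) = ((e:ℝ) * A.card)/((E.card:ℝ) * a) := by
    field_simp
  rw [key, hre, div_le_div_iff₀ hEr (by positivity)]
  constructor
  · intro h; nlinarith [mul_pos hAr hEr]
  · intro h; nlinarith [mul_pos hAr hEr]
end

section
/- With the same setup, if R_Z(h^t) < 1/2, R_Z(h^t) > 0, R^{h^t}_{acc(h^t)}(h^s) > 0, and R_Z(h^s) ≤ R_Z(h^t), then R^{h^t}_{err(h^t)}(h^s) / R^{h^t}_{acc(h^t)}(h^s) > 1; i.e., if the teacher is better than random guessing and the student is at least as good as the teacher, the student must disagree with the teacher relatively more on the teacher's error set than on its accuracy set. -/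
open Finset

variable {ι X : Type*}

theorem better_than_random (Z : Finset ι) (x : ι → X) (y : ι → Bool) (ht hs : X → Bool)
    (hacc : (accSet Z x y ht).Nonempty) (herr : (errSet Z x y ht).Nonempty)
    (hhalf : risk Z x y ht < 1 / 2) (htpos : 0 < risk Z x y ht)
    (haccpos : 0 < tsRisk (accSet Z x y ht) x ht hs)
    (hle : risk Z x y hs ≤ risk Z x y ht) :
    tsRisk (errSet Z x y ht) x ht hs / tsRisk (accSet Z x y ht) x ht hs > 1 := by
  classical
  set A := accSet Z x y ht with hA
  set E := errSet Z x y ht with hE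
  set dA := (A.filter (fun i => ht (x i) ≠ hs (x i))).card with hdA
  set dE := (E.filter (fun i => ht (x i) ≠ hs (x i))).card with hdE
  have hApos : 0 < A.card := card_pos.mpr hacc
  have hEpos : 0 < E.card := card_pos.mpr herr
  have hZcard : Z.card = A.card + E.card := by
    rw [hA, hE, accSet, errSet, card_filter_add_card_filter_not]
  have hZpos : 0 < Z.card := by omega
  -- split the student's error count
  have hsplit : (Z.filter (fun i => hs (x i) ≠ y i)).card
      = (A.filter (fun i => hs (x i) ≠ y i)).card
        + (E.filter (fun i => hs (x i) ≠ y i)).card := by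
    have hunion : A ∪ E = Z := by
      simp only [hA, hE, accSet, errSet, ne_eq]
      exact filter_union_filter_not_eq _ Z
    have hdisj : Disjoint A E := by
      simp only [hA, hE, accSet, errSet, ne_eq]
      exact disjoint_filter_filter_not Z Z _
    rw [← hunion, filter_union, card_union_of_disjoint
      (hdisj.mono (filter_subset _ _) (filter_subset _ _))]
  have hAeq : A.filter (fun i => hs (x i) ≠ y i)
      = A.filter (fun i => ht (x i) ≠ hs (x i)) := by
    apply filter_congr
    intro i hi
    have h1 : ht (x i) = y i := (mem_filter.mp hi).2
    cases hy : y i <;> cases hht : ht (x i) <;> cases hhs : hs (x i) <;> simp_all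
  have hEeq : E.filter (fun i => hs (x i) ≠ y i)
      = E.filter (fun i => ¬ (ht (x i) ≠ hs (x i))) := by
    apply filter_congr
    intro i hi
    have h1 : ht (x i) ≠ y i := (mem_filter.mp hi).2
    cases hy : y i <;> cases hht : ht (x i) <;> cases hhs : hs (x i) <;> simp_all
  have hEcard : dE + (E.filter (fun i => ¬ (ht (x i) ≠ hs (x i)))).card = E.card := by
    rw [hdE, card_filter_add_card_filter_not]
  -- from hle deduce dA ≤ dE
  have hsle : ((Z.filter (fun i => hs (x i) ≠ y i)).card : ℝ) ≤ E.card := by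
    have := hle
    rw [risk, risk] at this
    have hz : (0:ℝ) < Z.card := by exact_mod_cast hZpos
    have := (div_le_div_iff_of_pos_right hz).mp this
    simpa [hE, errSet] using this
  have hslen : (Z.filter (fun i => hs (x i) ≠ y i)).card ≤ E.card := by exact_mod_cast hsle
  have hdAdE : dA ≤ dE := by
    rw [hsplit, hAeq, hEeq] at hslen
    omega
  -- dA positive
  have hdApos : 0 < dA := by
    by_contra h
    have : dA = 0 := by omega
    rw [tsRisk, ← hdA, this] at haccpos
    simp at haccpos
  -- E.card < A.card from hhalf
  have hEA : E.card < A.card := by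
    rw [risk] at hhalf
    replace hhalf : (E.card : ℝ) / Z.card < 1/2 := by simpa [hE, errSet] using hhalf
    have hz : (0:ℝ) < Z.card := by exact_mod_cast hZpos
    have : (E.card : ℝ) * 2 < Z.card := by
      have := (div_lt_div_iff₀ hz (by norm_num : (0:ℝ) < 2)).mp hhalf
      linarith
    have : E.card * 2 < Z.card := by exact_mod_cast this
    omega
  -- finish
  rw [tsRisk, tsRisk, ← hdA, ← hdE]
  have haR : (0:ℝ) < A.card := by exact_mod_cast hApos
  have heR : (0:ℝ) < E.card := by exact_mod_cast hEpos
  have hdAR : (0:ℝ) < dA := by exact_mod_cast hdApos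
  rw [gt_iff_lt, one_lt_div (by positivity)]
  rw [div_lt_div_iff₀ haR heR]
  have : dA * E.card < dE * A.card := by
    calc dA * E.card < dA * A.card := by exact Nat.mul_lt_mul_of_le_of_lt (le_refl dA) hEA hdApos
    _ ≤ dE * A.card := Nat.mul_le_mul_right _ hdAdE
  exact_mod_cast this
end

section
/- With the same setup, R_Z(h^s) < R_Z(h^t) (strict inequality) if and only if R^{h^t}_{err(h^t)}(h^s)·R_Z(h^t) > R^{h^t}_{acc(h^t)}(h^s)·(1 − R_Z(h^t)), assuming acc(h^t) and err(h^t) are both nonempty. -/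
open Finset

variable {ι X : Type*}

theorem truth_over_teacher_strict (Z : Finset ι) (x : ι → X) (y : ι → Bool) (ht hs : X → Bool)
    (hacc : (accSet Z x y ht).Nonempty) (herr : (errSet Z x y ht).Nonempty) :
    risk Z x y hs < risk Z x y ht ↔
      tsRisk (errSet Z x y ht) x ht hs * risk Z x y ht >
        tsRisk (accSet Z x y ht) x ht hs * (1 - risk Z x y ht) := by
  classical
  set A := accSet Z x y ht with hAdef
  set E := errSet Z x y ht with hEdef
  set a := A.card with hadef
  set e := E.card with hedef
  set dA := (A.filter (fun i => ht (x i) ≠ hs (x i))).card with hdAdef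
  set dE := (E.filter (fun i => ht (x i) ≠ hs (x i))).card with hdEdef
  have hsplit : a + e = Z.card := by
    simpa [hadef, hedef, hAdef, hEdef, accSet, errSet] using
      Finset.card_filter_add_card_filter_not (s := Z) (p := fun i => ht (x i) = y i)
  have hapos : 0 < a := card_pos.mpr hacc
  have hepos : 0 < e := card_pos.mpr herr
  have hnpos : 0 < Z.card := by omega
  have hdEe : dE ≤ e := card_filter_le _ _
  -- student errors on A are exactly disagreements with teacher
  have h1 : A.filter (fun i => hs (x i) ≠ y i) = A.filter (fun i => ht (x i) ≠ hs (x i)) := by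
    apply filter_congr
    intro i hi
    have hy : ht (x i) = y i := (mem_filter.mp hi).2
    rw [← hy]
    simp [ne_comm]
  -- student errors on E are exactly agreements with teacher
  have h2 : E.filter (fun i => hs (x i) ≠ y i)
      = E.filter (fun i => ¬ (ht (x i) ≠ hs (x i))) := by
    apply filter_congr
    intro i hi
    have hy : ht (x i) ≠ y i := by
      have := (mem_filter.mp hi).2
      simpa [hEdef, errSet] using this
    cases hb1 : ht (x i) <;> cases hb2 : hs (x i) <;> cases hb3 : y i <;> simp_all
  have h2card : (E.filter (fun i => hs (x i) ≠ y i)).card = e - dE := by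
    have := Finset.card_filter_add_card_filter_not
      (s := E) (p := fun i => ht (x i) ≠ hs (x i))
    rw [h2]
    omega
  have hsplit2 : (Z.filter (fun i => hs (x i) ≠ y i)).card
      = (A.filter (fun i => hs (x i) ≠ y i)).card
        + (E.filter (fun i => hs (x i) ≠ y i)).card := by
    rw [hAdef, hEdef]
    unfold accSet errSet
    simpa [Finset.filter_comm, ne_eq] using (Finset.card_filter_add_card_filter_not
      (s := Z.filter (fun i => hs (x i) ≠ y i)) (p := fun i => ht (x i) = y i)).symm
  have hk : (Z.filter (fun i => hs (x i) ≠ y i)).card = dA + (e - dE) := by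
    rw [hsplit2, h1, h2card]
  -- real number facts
  have hnR : (0:ℝ) < (Z.card : ℝ) := by exact_mod_cast hnpos
  have haR : (0:ℝ) < (a : ℝ) := by exact_mod_cast hapos
  have heR : (0:ℝ) < (e : ℝ) := by exact_mod_cast hepos
  have hrt : risk Z x y ht = (e : ℝ) / Z.card := rfl
  have hrs : risk Z x y hs = ((dA : ℝ) + ((e : ℝ) - dE)) / Z.card := by
    unfold risk
    rw [hk]
    push_cast [hdEe]
    ring_nf
  have htsE : tsRisk E x ht hs = (dE : ℝ) / e := rfl
  have htsA : tsRisk A x ht hs = (dA : ℝ) / a := rfl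
  have hone : 1 - (e : ℝ) / Z.card = (a : ℝ) / Z.card := by
    have hn : ((Z.card : ℝ)) = (a : ℝ) + e := by exact_mod_cast hsplit.symm
    field_simp [hn]
    linarith [hn]
  rw [hrt, hrs, htsE, htsA, hone]
  have e1 : (dE : ℝ)/e * ((e : ℝ)/Z.card) = (dE : ℝ) / Z.card := by
    field_simp
  have e2 : (dA : ℝ)/a * ((a : ℝ)/Z.card) = (dA : ℝ) / Z.card := by
    field_simp
  rw [e1, e2, div_lt_div_iff_of_pos_right hnR, gt_iff_lt, div_lt_div_iff_of_pos_right hnR]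
  constructor
  · intro h; linarith
  · intro h; linarith
end
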